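/- arXiv:1111.2833 — 2 statements merged into one kernel-verified Lean document; each statement's English description precedes it below -/
import Mathlib

section
/- Let 𝔓 be a polymorphism from (A,α) to (B,β), i.e. a measure on A × B × ℝ₊ˣ whose projection to A equals α and such that the projection of t·𝔓 to B equals β. Then for u = v + iw with 0 ≤ v ≤ 1, the bilinear form S_u(𝔓; f, g) = ∭ f(a) g(b) t^{v+iw} d𝔓(a,b,t) satisfies |S_u(𝔓; f, g)| ≤ ‖f‖_{L^{1/(1-v)}(A)} · ‖g‖_{L^{1/v}(B)}. -/
open MeasureTheory Set ENNReal

noncomputable section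

/-- A polymorphism from `(A, α)` to `(B, β)`: a measure `P` on `A × B × ℝ₊ˣ`
(realized on `A × B × ℝ`, supported where the last coordinate `t` is positive)
whose projection to `A` is `α`, and such that the projection of `t·P` to `B` is `β`. -/
def IsPolymorphism {A B : Type*} [MeasurableSpace A] [MeasurableSpace B]
    (α : Measure A) (β : Measure B) (P : Measure (A × B × ℝ)) : Prop :=
  P.map (fun x => x.1) = α ∧
  (P.withDensity (fun x => ENNReal.ofReal x.2.2)).map (fun x => x.2.1) = β ∧
  P {x | x.2.2 ≤ 0} = 0

/-- The bilinear form `S_u(P; f, g) = ∭ f(a) g(b) t^u dP(a,b,t)`. -/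
def polyForm {A B : Type*} [MeasurableSpace A] [MeasurableSpace B]
    (P : Measure (A × B × ℝ)) (u : ℂ) (f : A → ℂ) (g : B → ℂ) : ℂ :=
  ∫ x, f x.1 * g x.2.1 * (x.2.2 : ℂ) ^ u ∂P

/-- Hölder estimate for the bilinear form of a polymorphism:
`|S_{v+iw}(P; f, g)| ≤ ‖f‖_{L^{1/(1-v)}(A)} · ‖g‖_{L^{1/v}(B)}`. -/
theorem polyForm_bound {A B : Type*} [MeasurableSpace A] [MeasurableSpace B]
    (α : Measure A) (β : Measure B) [IsProbabilityMeasure α] [IsProbabilityMeasure β]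
    (P : Measure (A × B × ℝ)) (hP : IsPolymorphism α β P)
    (v w : ℝ) (hv0 : 0 ≤ v) (hv1 : v ≤ 1)
    (f : A → ℂ) (g : B → ℂ) (hf : AEStronglyMeasurable f α) (hg : AEStronglyMeasurable g β) :
    ENNReal.ofReal ‖polyForm P (v + w * Complex.I) f g‖ ≤
      eLpNorm f (ENNReal.ofReal (1 - v))⁻¹ α * eLpNorm g (ENNReal.ofReal v)⁻¹ β := by
  obtain ⟨hα, hβ, hpos⟩ := hP
  set u : ℂ := v + w * Complex.I with hu
  have hure : u.re = v := by simp [hu]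
  set f' := hf.mk f with hf'def
  set g' := hg.mk g with hg'def
  have hf'm : StronglyMeasurable f' := hf.stronglyMeasurable_mk
  have hg'm : StronglyMeasurable g' := hg.stronglyMeasurable_mk
  have hfe : f =ᵐ[α] f' := hf.ae_eq_mk
  have hf'meas : Measurable f' := hf'm.measurable
  have hg'meas : Measurable g' := hg'm.measurable
  have hge : g =ᵐ[β] g' := hg.ae_eq_mk
  have hD : Measurable (fun x : A × B × ℝ => ENNReal.ofReal x.2.2) := by fun_prop
  have hπ1 : Measurable (fun x : A × B × ℝ => x.1) := measurable_fst
  have hπ2 : Measurable (fun x : A × B × ℝ => x.2.1) := measurable_fst.comp measurable_snd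
  have htpos : ∀ᵐ x ∂P, 0 < x.2.2 := by
    rw [ae_iff]
    convert hpos using 2
    ext x; simp
  -- transfer a.e. statements from the withDensity measure to P
  have key : ∀ {Q : A × B × ℝ → Prop},
      (∀ᵐ x ∂(P.withDensity fun x => ENNReal.ofReal x.2.2), Q x) → ∀ᵐ x ∂P, Q x := by
    intro Q h
    rw [ae_withDensity_iff hD] at h
    filter_upwards [h, htpos] with x hx ht
    exact hx (by simp [ENNReal.ofReal_eq_zero, not_le, ht])
  have hfP : ∀ᵐ x ∂P, f x.1 = f' x.1 := by
    have : ∀ᵐ a ∂(P.map fun x => x.1), f a = f' a := hα ▸ hfe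
    exact ae_of_ae_map hπ1.aemeasurable this
  have hgP : ∀ᵐ x ∂P, g x.2.1 = g' x.2.1 := by
    have : ∀ᵐ b ∂((P.withDensity fun x => ENNReal.ofReal x.2.2).map fun x => x.2.1),
        g b = g' b := hβ ▸ hge
    exact key (ae_of_ae_map hπ2.aemeasurable this)
  -- Step A : bound by a lintegral
  have stepA : ENNReal.ofReal ‖polyForm P u f g‖ ≤
      ∫⁻ x, (‖f' x.1‖₊ : ℝ≥0∞) * (‖g' x.2.1‖₊ : ℝ≥0∞) * (ENNReal.ofReal x.2.2) ^ v ∂P := by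
    rw [ofReal_norm]
    refine le_trans (enorm_integral_le_lintegral_enorm _) (le_of_eq ?_)
    refine lintegral_congr_ae ?_
    filter_upwards [hfP, hgP, htpos] with x h1 h2 ht
    have habs : (‖((x.2.2 : ℂ)) ^ u‖₊ : ℝ≥0∞) = (ENNReal.ofReal x.2.2) ^ v := by
      rw [← enorm_eq_nnnorm, ← ofReal_norm,
        Complex.norm_cpow_eq_rpow_re_of_pos ht, hure, ENNReal.ofReal_rpow_of_pos ht]
    simp only [enorm_eq_nnnorm]
    rw [nnnorm_mul, nnnorm_mul, ENNReal.coe_mul, ENNReal.coe_mul, habs, h1, h2]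
  rw [eLpNorm_congr_ae hfe, eLpNorm_congr_ae hge]
  refine stepA.trans ?_
  -- integral identities
  have hmapA : ∀ r : ℝ, ∫⁻ x, (‖f' x.1‖₊ : ℝ≥0∞) ^ r ∂P = ∫⁻ a, (‖f' a‖₊ : ℝ≥0∞) ^ r ∂α := by
    intro r
    rw [← hα, lintegral_map (by fun_prop) hπ1]
  have hmapB : ∀ r : ℝ, ∫⁻ x, (‖g' x.2.1‖₊ : ℝ≥0∞) ^ r * ENNReal.ofReal x.2.2 ∂P
      = ∫⁻ b, (‖g' b‖₊ : ℝ≥0∞) ^ r ∂β := by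
    intro r
    rw [← hβ, lintegral_map (by fun_prop) hπ2,
      lintegral_withDensity_eq_lintegral_mul P hD (by fun_prop)]
    refine lintegral_congr fun x => ?_
    simp [mul_comm]
  have hmapA1 : ∫⁻ x, (‖f' x.1‖₊ : ℝ≥0∞) ∂P = ∫⁻ a, (‖f' a‖₊ : ℝ≥0∞) ∂α := by
    simpa using hmapA 1
  have hmapB1 : ∫⁻ x, (‖g' x.2.1‖₊ : ℝ≥0∞) * ENNReal.ofReal x.2.2 ∂P
      = ∫⁻ b, (‖g' b‖₊ : ℝ≥0∞) ∂β := by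
    simpa using hmapB 1
  rcases hv0.eq_or_lt with hv0' | hv0'
  · -- case v = 0
    subst hv0'
    simp only [ENNReal.rpow_zero, mul_one, sub_zero, ENNReal.ofReal_one, inv_one,
      ENNReal.ofReal_zero, ENNReal.inv_zero]
    set C := eLpNorm g' ∞ β with hC
    have hCle : ∀ᵐ x ∂P, (‖g' x.2.1‖₊ : ℝ≥0∞) ≤ C := by
      have hb : ∀ᵐ b ∂β, (‖g' b‖₊ : ℝ≥0∞) ≤ C := by
        have : C = essSup (fun b => (‖g' b‖₊ : ℝ≥0∞)) β := by
          simp [hC, eLpNorm_exponent_top, eLpNormEssSup]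
          rfl
        rw [this]
        exact ENNReal.ae_le_essSup _
      rw [← hβ] at hb
      exact key (ae_of_ae_map hπ2.aemeasurable hb)
    calc ∫⁻ x, (‖f' x.1‖₊ : ℝ≥0∞) * (‖g' x.2.1‖₊ : ℝ≥0∞) ∂P
        ≤ ∫⁻ x, C * (‖f' x.1‖₊ : ℝ≥0∞) ∂P := by
          refine lintegral_mono_ae ?_
          filter_upwards [hCle] with x hx
          rw [mul_comm]
          exact mul_le_mul' hx le_rfl
      _ = C * ∫⁻ x, (‖f' x.1‖₊ : ℝ≥0∞) ∂P := lintegral_const_mul C (by fun_prop)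
      _ = C * ∫⁻ a, (‖f' a‖₊ : ℝ≥0∞) ∂α := by rw [hmapA1]
      _ = eLpNorm f' 1 α * C := by rw [eLpNorm_one_eq_lintegral_enorm, mul_comm]; rfl
  rcases hv1.lt_or_eq with hv1' | hv1'
  · -- main case 0 < v < 1
    have h1v : 0 < 1 - v := by linarith
    have hΦ : AEMeasurable (fun x : A × B × ℝ => (‖f' x.1‖₊ : ℝ≥0∞) ^ (1 - v)⁻¹) P := by fun_prop
    have hΨ : AEMeasurable
        (fun x : A × B × ℝ => (‖g' x.2.1‖₊ : ℝ≥0∞) ^ v⁻¹ * ENNReal.ofReal x.2.2) P := by fun_prop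
    have hold := ENNReal.lintegral_mul_norm_pow_le hΦ hΨ h1v.le hv0 (by ring)
    have hLHS : ∫⁻ x, ((‖f' x.1‖₊ : ℝ≥0∞) ^ (1 - v)⁻¹) ^ (1 - v) *
          ((‖g' x.2.1‖₊ : ℝ≥0∞) ^ v⁻¹ * ENNReal.ofReal x.2.2) ^ v ∂P
        = ∫⁻ x, (‖f' x.1‖₊ : ℝ≥0∞) * (‖g' x.2.1‖₊ : ℝ≥0∞) * (ENNReal.ofReal x.2.2) ^ v ∂P := by
      refine lintegral_congr fun x => ?_
      rw [← ENNReal.rpow_mul, inv_mul_cancel₀ h1v.ne', ENNReal.rpow_one,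
        ENNReal.mul_rpow_of_nonneg _ _ hv0, ← ENNReal.rpow_mul,
        inv_mul_cancel₀ hv0'.ne', ENNReal.rpow_one, mul_assoc]
    have hp'0 : (ENNReal.ofReal (1 - v))⁻¹ ≠ 0 := by
      simp [ENNReal.inv_ne_zero]
    have hp'top : (ENNReal.ofReal (1 - v))⁻¹ ≠ ∞ := by
      simp only [ne_eq, ENNReal.inv_ne_top, ENNReal.ofReal_eq_zero, not_le]
      linarith
    have hq'0 : (ENNReal.ofReal v)⁻¹ ≠ 0 := by
      simp [ENNReal.inv_ne_zero]
    have hq'top : (ENNReal.ofReal v)⁻¹ ≠ ∞ := by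
      simp only [ne_eq, ENNReal.inv_ne_top, ENNReal.ofReal_eq_zero, not_le]
      linarith
    have hfN : eLpNorm f' (ENNReal.ofReal (1 - v))⁻¹ α
        = (∫⁻ a, (‖f' a‖₊ : ℝ≥0∞) ^ (1 - v)⁻¹ ∂α) ^ (1 - v) := by
      rw [eLpNorm_eq_lintegral_rpow_enorm_toReal hp'0 hp'top]
      simp only [enorm_eq_nnnorm]
      simp [ENNReal.toReal_inv, ENNReal.toReal_ofReal h1v.le, one_div]
    have hgN : eLpNorm g' (ENNReal.ofReal v)⁻¹ β
        = (∫⁻ b, (‖g' b‖₊ : ℝ≥0∞) ^ v⁻¹ ∂β) ^ v := by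
      rw [eLpNorm_eq_lintegral_rpow_enorm_toReal hq'0 hq'top]
      simp only [enorm_eq_nnnorm]
      simp [ENNReal.toReal_inv, ENNReal.toReal_ofReal hv0, one_div]
    calc ∫⁻ x, (‖f' x.1‖₊ : ℝ≥0∞) * (‖g' x.2.1‖₊ : ℝ≥0∞) * (ENNReal.ofReal x.2.2) ^ v ∂P
        = ∫⁻ x, ((‖f' x.1‖₊ : ℝ≥0∞) ^ (1 - v)⁻¹) ^ (1 - v) *
            ((‖g' x.2.1‖₊ : ℝ≥0∞) ^ v⁻¹ * ENNReal.ofReal x.2.2) ^ v ∂P := hLHS.symm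
      _ ≤ (∫⁻ x, (‖f' x.1‖₊ : ℝ≥0∞) ^ (1 - v)⁻¹ ∂P) ^ (1 - v) *
            (∫⁻ x, (‖g' x.2.1‖₊ : ℝ≥0∞) ^ v⁻¹ * ENNReal.ofReal x.2.2 ∂P) ^ v := hold
      _ = eLpNorm f' (ENNReal.ofReal (1 - v))⁻¹ α * eLpNorm g' (ENNReal.ofReal v)⁻¹ β := by
          rw [hmapA (1 - v)⁻¹, hmapB v⁻¹, hfN, hgN]
  · -- case v = 1
    subst hv1'
    simp only [sub_self, ENNReal.ofReal_zero, ENNReal.inv_zero, ENNReal.ofReal_one, inv_one,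
      ENNReal.rpow_one]
    set C := eLpNorm f' ∞ α with hC
    have hCle : ∀ᵐ x ∂P, (‖f' x.1‖₊ : ℝ≥0∞) ≤ C := by
      have ha : ∀ᵐ a ∂α, (‖f' a‖₊ : ℝ≥0∞) ≤ C := by
        have : C = essSup (fun a => (‖f' a‖₊ : ℝ≥0∞)) α := by
          simp [hC, eLpNorm_exponent_top, eLpNormEssSup]
          rfl
        rw [this]
        exact ENNReal.ae_le_essSup _
      rw [← hα] at ha
      exact ae_of_ae_map hπ1.aemeasurable ha
    calc ∫⁻ x, (‖f' x.1‖₊ : ℝ≥0∞) * (‖g' x.2.1‖₊ : ℝ≥0∞) * ENNReal.ofReal x.2.2 ∂P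
        ≤ ∫⁻ x, C * ((‖g' x.2.1‖₊ : ℝ≥0∞) * ENNReal.ofReal x.2.2) ∂P := by
          refine lintegral_mono_ae ?_
          filter_upwards [hCle] with x hx
          rw [mul_assoc]
          exact mul_le_mul' hx le_rfl
      _ = C * ∫⁻ x, (‖g' x.2.1‖₊ : ℝ≥0∞) * ENNReal.ofReal x.2.2 ∂P :=
          lintegral_const_mul C (by fun_prop)
      _ = C * eLpNorm g' 1 β := by rw [hmapB1, eLpNorm_one_eq_lintegral_enorm]; rfl
end
end

section
/- Let μ_j, μ ∈ M^▽. If the Mellin transforms converge pointwise on both boundary lines of the strip, i.e. Φ_{μ_j}(iw) → Φ_μ(iw) and Φ_{μ_j}(1+iw) → Φ_μ(1+iw) for every real w, then μ_j converges to μ in M^▽, meaning μ_j → μ weakly and t·μ_j → t·μ weakly as finite measures on ℝ₊ˣ. -/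
open MeasureTheory Set Filter Topology

noncomputable section

/-- `μ ∈ M^▽`. -/
def MemMtri (μ : Measure ℝ) : Prop :=
  μ (Set.Ioi (0:ℝ))ᶜ = 0 ∧ μ Set.univ < ⊤ ∧ (∫⁻ t, ENNReal.ofReal t ∂μ) < ⊤

/-- Mellin transform `Φ_μ(u) = ∫ t^u dμ(t)`. -/
def mellinT (μ : Measure ℝ) (u : ℂ) : ℂ := ∫ t, (t : ℂ) ^ u ∂μ

open scoped ENNReal NNReal

namespace MellinLevyAux

lemma integrable_of_bound {α : Type*} [MeasurableSpace α] {E : Type*} [NormedAddCommGroup E]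
    {μ : Measure α} [IsFiniteMeasure μ] {h : α → E} (hm : AEStronglyMeasurable h μ)
    (C : ℝ) (hb : ∀ t, ‖h t‖ ≤ C) : Integrable h μ :=
  Integrable.mono' (integrable_const C) hm (Filter.Eventually.of_forall hb)

lemma inner_eval {u : ℝ} (hu : 0 < u) (s : ℝ) :
    ∫ w in Set.Ioo 0 u, (1 - Real.cos (w * s)) =
      u - (if s = 0 then u else Real.sin (u * s) / s) := by
  rw [← MeasureTheory.integral_Ioc_eq_integral_Ioo,
    ← intervalIntegral.integral_of_le hu.le]
  by_cases hs : s = 0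
  · simp [hs]
  · rw [intervalIntegral.integral_sub intervalIntegrable_const
      (by apply Continuous.intervalIntegrable; fun_prop)]
    rw [if_neg hs]
    rw [intervalIntegral.integral_comp_mul_right Real.cos hs]
    simp [Real.sin_zero, smul_eq_mul, div_eq_inv_mul, mul_comm]

lemma inner_abs_le {u : ℝ} (hu : 0 < u) (s : ℝ) :
    |if s = 0 then u else Real.sin (u * s) / s| ≤ u := by
  by_cases hs : s = 0
  · simp [hs, abs_of_pos hu]
  · rw [if_neg hs]
    calc |Real.sin (u * s) / s| = |Real.sin (u * s)| / |s| := by rw [abs_div]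
    _ ≤ |u * s| / |s| :=
        (div_le_div_iff_of_pos_right (abs_pos.2 hs)).mpr Real.abs_sin_le_abs
    _ = u := by rw [abs_mul, abs_of_pos hu, mul_div_assoc, div_self (abs_ne_zero.2 hs), mul_one]

/-- `u - sin(us)/s` is nonneg. -/
lemma inner_nonneg {u : ℝ} (hu : 0 < u) (s : ℝ) :
    0 ≤ u - (if s = 0 then u else Real.sin (u * s) / s) := by
  have := abs_le.1 (inner_abs_le hu s)
  linarith [this.2]

lemma inner_ge {u : ℝ} (hu : 0 < u) {s : ℝ} (hs : 2 / u ≤ |s|) :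
    u / 2 ≤ u - (if s = 0 then u else Real.sin (u * s) / s) := by
  have hs0 : s ≠ 0 := by
    intro h; rw [h, abs_zero] at hs
    exact absurd hs (not_le.2 (by positivity))
  rw [if_neg hs0]
  have h1 : Real.sin (u * s) / s ≤ 1 / |s| := by
    calc Real.sin (u * s) / s ≤ |Real.sin (u * s) / s| := le_abs_self _
    _ = |Real.sin (u * s)| / |s| := by rw [abs_div]
    _ ≤ 1 / |s| :=
        (div_le_div_iff_of_pos_right (abs_pos.2 hs0)).mpr (Real.abs_sin_le_one _)
  have h2 : 1 / |s| ≤ u / 2 := by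
    rw [div_le_div_iff₀ (abs_pos.2 hs0) two_pos] at *
    nlinarith [abs_pos.2 hs0, (div_le_iff₀ hu).1 (le_refl (2/u))]
  linarith

lemma key (μ : Measure ℝ) [IsFiniteMeasure μ] {u : ℝ} (hu : 0 < u) :
    u / 2 * (μ {t : ℝ | 2 / u ≤ |Real.log t|}).toReal ≤
      ∫ w in Set.Ioo 0 u,
        ((μ Set.univ).toReal - ∫ t, Real.cos (w * Real.log t) ∂μ) := by
  set S : Set ℝ := {t : ℝ | 2 / u ≤ |Real.log t|} with hS
  have hSm : MeasurableSet S :=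
    measurableSet_le measurable_const Real.measurable_log.abs
  have hcos_int : ∀ w : ℝ, Integrable (fun t => Real.cos (w * Real.log t)) μ := by
    intro w
    exact integrable_of_bound
      (((Real.measurable_log.const_mul w).cos).aestronglyMeasurable) 1
      (fun t => by rw [Real.norm_eq_abs]; exact Real.abs_cos_le_one _)
  -- rewrite integrand as a double integral
  have hre : ∀ w : ℝ, (μ Set.univ).toReal - (∫ t, Real.cos (w * Real.log t) ∂μ) =
      ∫ t, (1 - Real.cos (w * Real.log t)) ∂μ := by
    intro w
    rw [integral_sub (integrable_const 1) (hcos_int w), integral_const, smul_eq_mul, mul_one, Measure.real]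
  simp_rw [hre]
  -- Fubini
  haveI : IsFiniteMeasure (volume.restrict (Set.Ioo (0:ℝ) u)) :=
    ⟨by rw [Measure.restrict_apply_univ]; exact measure_Ioo_lt_top⟩
  have hInt : Integrable (Function.uncurry fun (w t : ℝ) => 1 - Real.cos (w * Real.log t))
      ((volume.restrict (Set.Ioo (0:ℝ) u)).prod μ) := by
    apply integrable_of_bound ?_ 2 ?_
    · apply Measurable.aestronglyMeasurable
      apply Measurable.const_sub
      exact (measurable_fst.mul (Real.measurable_log.comp measurable_snd)).cos
    · rintro ⟨w, t⟩
      rw [Function.uncurry_apply_pair, Real.norm_eq_abs]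
      have := Real.abs_cos_le_one (w * Real.log t)
      rw [abs_sub_le_iff]; constructor <;> nlinarith [abs_le.1 this]
  rw [MeasureTheory.integral_integral_swap hInt]
  -- evaluate inner integrals
  have : ∀ t : ℝ, (∫ w in Set.Ioo 0 u, (1 - Real.cos (w * Real.log t))) =
      u - (if Real.log t = 0 then u else Real.sin (u * Real.log t) / Real.log t) :=
    fun t => inner_eval hu (Real.log t)
  simp_rw [this]
  set h : ℝ → ℝ := fun t =>
    u - (if Real.log t = 0 then u else Real.sin (u * Real.log t) / Real.log t) with hh
  have hhm : Measurable h := by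
    apply Measurable.const_sub
    apply Measurable.ite (Real.measurable_log (measurableSet_singleton 0)) measurable_const
    exact (Real.measurable_log.const_mul u).sin.div Real.measurable_log
  have hhb : ∀ t, ‖h t‖ ≤ 2 * u := by
    intro t
    have h1 := abs_le.1 (inner_abs_le hu (Real.log t))
    rw [Real.norm_eq_abs, abs_le]
    constructor <;> simp only [hh] <;> [linarith [h1.2]; linarith [h1.1]]
  have hhi : Integrable h μ := integrable_of_bound hhm.aestronglyMeasurable _ hhb
  calc u / 2 * (μ S).toReal ≤ ∫ t in S, h t ∂μ := by
        apply setIntegral_ge_of_const_le_real hSm (measure_ne_top μ S) _ (hhi.integrableOn)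
        intro t ht
        exact inner_ge hu ht
  _ ≤ ∫ t, h t ∂μ :=
        setIntegral_le_integral hhi (Filter.Eventually.of_forall (fun t => inner_nonneg hu _))


lemma exp_arg (w s : ℝ) : Complex.I * w * s = ((w * s : ℝ) : ℂ) * Complex.I := by
  push_cast; ring

lemma ch_int (κ : Measure ℝ) [IsFiniteMeasure κ] (w : ℝ) :
    Integrable (fun t => Complex.exp (Complex.I * w * Real.log t)) κ := by
  apply integrable_of_bound ?_ 1 ?_
  · apply Measurable.aestronglyMeasurable
    apply Complex.measurable_exp.comp
    apply Measurable.const_mul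
    exact Complex.measurable_ofReal.comp Real.measurable_log
  · intro t
    rw [exp_arg, Complex.norm_exp_ofReal_mul_I]

lemma cos_int (κ : Measure ℝ) [IsFiniteMeasure κ] (w : ℝ) :
    Integrable (fun t => Real.cos (w * Real.log t)) κ :=
  integrable_of_bound ((Real.measurable_log.const_mul w).cos).aestronglyMeasurable 1
    (fun t => by rw [Real.norm_eq_abs]; exact Real.abs_cos_le_one _)

lemma ch_re (κ : Measure ℝ) [IsFiniteMeasure κ] (w : ℝ) :
    (∫ t, Complex.exp (Complex.I * w * Real.log t) ∂κ).re =
      ∫ t, Real.cos (w * Real.log t) ∂κ := by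
  have h := integral_re (𝕜 := ℂ) (ch_int κ w)
  simp only [RCLike.re_eq_complex_re] at h
  rw [← h]
  congr 1; funext t
  rw [exp_arg, Complex.exp_ofReal_mul_I_re]

lemma ch_zero (κ : Measure ℝ) [IsFiniteMeasure κ] :
    (∫ t, Complex.exp (Complex.I * (0:ℝ) * Real.log t) ∂κ) = ((κ Set.univ).toReal : ℂ) := by
  simp [integral_const, Measure.real]

lemma mass_tendsto (μ : ℕ → Measure ℝ) (ν : Measure ℝ) (hμf : ∀ j, IsFiniteMeasure (μ j))
    [IsFiniteMeasure ν]
    (hch0 : Tendsto (fun j => ∫ t, Complex.exp (Complex.I * (0:ℝ) * Real.log t) ∂(μ j)) atTop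
      (𝓝 (∫ t, Complex.exp (Complex.I * (0:ℝ) * Real.log t) ∂ν))) :
    Tendsto (fun j => ((μ j) Set.univ).toReal) atTop (𝓝 ((ν Set.univ).toReal)) := by
  have := (Complex.continuous_re.tendsto _).comp hch0
  simp only [Function.comp_def] at this
  convert this using 2 with j
  · haveI := hμf j
    rw [ch_zero (μ j)]; simp
  · rw [ch_zero ν]; simp

/-- Characteristic function is continuous in `w`. -/
lemma cosInt_continuous (κ : Measure ℝ) [IsFiniteMeasure κ] :
    Continuous (fun w : ℝ => ∫ t, Real.cos (w * Real.log t) ∂κ) := by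
  apply continuous_of_dominated (bound := fun _ => 1)
  · exact fun w => ((Real.measurable_log.const_mul w).cos).aestronglyMeasurable
  · intro w
    exact Filter.Eventually.of_forall fun t => by
      rw [Real.norm_eq_abs]; exact Real.abs_cos_le_one _
  · exact integrable_const 1
  · exact Filter.Eventually.of_forall fun t => by fun_prop

lemma cosInt_abs_le (κ : Measure ℝ) [IsFiniteMeasure κ] (w : ℝ) :
    |∫ t, Real.cos (w * Real.log t) ∂κ| ≤ (κ Set.univ).toReal := by
  have e1 : |∫ t, Real.cos (w * Real.log t) ∂κ| ≤ ∫ t, |Real.cos (w * Real.log t)| ∂κ := by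
    simpa [Real.norm_eq_abs] using
      norm_integral_le_integral_norm (μ := κ) (fun t => Real.cos (w * Real.log t))
  have e2 : ∫ t, |Real.cos (w * Real.log t)| ∂κ ≤ ∫ _t, (1:ℝ) ∂κ := by
    apply integral_mono (cos_int κ w).abs (integrable_const 1)
    intro t; exact Real.abs_cos_le_one _
  have e3 : ∫ _t, (1:ℝ) ∂κ = (κ Set.univ).toReal := by simp [integral_const, Measure.real]
  linarith

lemma Fν_bound (κ : Measure ℝ) [IsFiniteMeasure κ] (w : ℝ) :
    ‖(κ Set.univ).toReal - ∫ t, Real.cos (w * Real.log t) ∂κ‖ ≤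
      (κ Set.univ).toReal + (κ Set.univ).toReal := by
  have h1 := abs_le.1 (cosInt_abs_le κ w)
  rw [Real.norm_eq_abs, abs_le]
  constructor <;> [linarith [h1.2]; linarith [h1.1]]

lemma tight (μ : ℕ → Measure ℝ) (ν : Measure ℝ) (hμf : ∀ j, IsFiniteMeasure (μ j))
    [IsFiniteMeasure ν]
    (hch : ∀ w : ℝ, Tendsto (fun j => ∫ t, Complex.exp (Complex.I * w * Real.log t) ∂(μ j)) atTop
      (𝓝 (∫ t, Complex.exp (Complex.I * w * Real.log t) ∂ν)))
    {ε : ℝ} (hε : 0 < ε) :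
    ∃ u : ℝ, 0 < u ∧ (ν {t : ℝ | 2 / u ≤ |Real.log t|}).toReal ≤ ε ∧
      ∀ᶠ j in atTop, ((μ j) {t : ℝ | 2 / u ≤ |Real.log t|}).toReal ≤ ε := by
  set m : ℝ := (ν Set.univ).toReal with hm
  set Fν : ℝ → ℝ := fun w => m - ∫ t, Real.cos (w * Real.log t) ∂ν with hFν
  have hFνc : Continuous Fν := continuous_const.sub (cosInt_continuous ν)
  have hFν0 : Fν 0 = 0 := by simp [hFν, hm, integral_const, Measure.real]
  -- choose δ
  have : ∀ᶠ w in 𝓝 (0:ℝ), |Fν w| < ε / 4 := by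
    have := hFνc.continuousAt (x := 0)
    rw [ContinuousAt, hFν0] at this
    have := this (Metric.ball_mem_nhds 0 (by positivity : (0:ℝ) < ε/4))
    filter_upwards [this] with w hw
    simpa [Real.dist_eq] using hw
  rw [Metric.eventually_nhds_iff] at this
  obtain ⟨δ, hδ, hδ'⟩ := this
  set u : ℝ := δ / 2 with hu'
  have hu : 0 < u := by positivity
  refine ⟨u, hu, ?_, ?_⟩
  -- bound on the ν-side integral
  · have hνle : ∫ w in Set.Ioo 0 u, Fν w ≤ ε / 4 * u := by
      have h1 : ∫ w in Set.Ioo 0 u, Fν w ≤ ∫ _w in Set.Ioo 0 u, (ε/4) := by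
        apply setIntegral_mono_on
        · haveI : IsFiniteMeasure (volume.restrict (Set.Ioo (0:ℝ) u)) :=
            ⟨by rw [Measure.restrict_apply_univ]; exact measure_Ioo_lt_top⟩
          exact integrable_of_bound (hFνc.aestronglyMeasurable) (m + m) (fun w => Fν_bound ν w)
        · exact integrableOn_const measure_Ioo_lt_top.ne
        · exact measurableSet_Ioo
        · intro w hw
          have : |w| < δ := by
            rw [abs_of_pos hw.1]
            calc w < u := hw.2
            _ < δ := by rw [hu']; linarith
          have := hδ' (y := w) (by rwa [Real.dist_eq, sub_zero])
          exact (abs_le.1 this.le).2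
      calc ∫ w in Set.Ioo 0 u, Fν w ≤ ∫ _w in Set.Ioo 0 u, (ε/4) := h1
      _ = ε / 4 * u := by
          rw [setIntegral_const, Real.volume_real_Ioo_of_le hu.le, sub_zero,
            smul_eq_mul, mul_comm]
    have hkey := key ν hu
    have : u / 2 * ((ν {t : ℝ | 2 / u ≤ |Real.log t|}).toReal) ≤ ε / 4 * u := le_trans hkey hνle
    nlinarith [ENNReal.toReal_nonneg (a := ν {t : ℝ | 2 / u ≤ |Real.log t|})]
  -- the μ j side
  · haveI : IsFiniteMeasure (volume.restrict (Set.Ioo (0:ℝ) u)) :=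
      ⟨by rw [Measure.restrict_apply_univ]; exact measure_Ioo_lt_top⟩
    have hmass := mass_tendsto μ ν hμf (hch 0)
    -- uniform eventual bound on masses
    have hmb : ∀ᶠ j in atTop, ((μ j) Set.univ).toReal ≤ m + 1 :=
      hmass.eventually (eventually_le_nhds (by linarith))
    -- convergence of the integrals over Ioo 0 u
    have hνle : ∫ w in Set.Ioo 0 u, Fν w ≤ ε / 4 * u := by
      have h1 : ∫ w in Set.Ioo 0 u, Fν w ≤ ∫ _w in Set.Ioo 0 u, (ε/4) := by
        apply setIntegral_mono_on
        · exact integrable_of_bound (hFνc.aestronglyMeasurable) (m + m) (fun w => Fν_bound ν w)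
        · exact integrableOn_const measure_Ioo_lt_top.ne
        · exact measurableSet_Ioo
        · intro w hw
          have : |w| < δ := by
            rw [abs_of_pos hw.1]
            calc w < u := hw.2
            _ < δ := by rw [hu']; linarith
          have := hδ' (y := w) (by rwa [Real.dist_eq, sub_zero])
          exact (abs_le.1 this.le).2
      calc ∫ w in Set.Ioo 0 u, Fν w ≤ ∫ _w in Set.Ioo 0 u, (ε/4) := h1
      _ = ε / 4 * u := by
          rw [setIntegral_const, Real.volume_real_Ioo_of_le hu.le, sub_zero,
            smul_eq_mul, mul_comm]
    have hconv : Tendsto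
        (fun j => ∫ w in Set.Ioo 0 u,
          (((μ j) Set.univ).toReal - ∫ t, Real.cos (w * Real.log t) ∂(μ j)))
        atTop (𝓝 (∫ w in Set.Ioo 0 u, Fν w)) := by
      apply tendsto_integral_filter_of_dominated_convergence (bound := fun _ => 2 * m + 2)
      · apply Filter.Eventually.of_forall
        intro j
        haveI := hμf j
        exact (continuous_const.sub (cosInt_continuous (μ j))).aestronglyMeasurable
      · filter_upwards [hmb] with j hj
        apply Filter.Eventually.of_forall
        intro w
        haveI := hμf j
        calc ‖((μ j) Set.univ).toReal - ∫ t, Real.cos (w * Real.log t) ∂(μ j)‖ ≤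
            ((μ j) Set.univ).toReal + ((μ j) Set.univ).toReal := Fν_bound (μ j) w
        _ ≤ 2 * m + 2 := by linarith
      · exact integrable_const _
      · apply Filter.Eventually.of_forall
        intro w
        have h1 := (Complex.continuous_re.tendsto _).comp (hch w)
        simp only [Function.comp_def] at h1
        have h2 : Tendsto (fun j => ((μ j) Set.univ).toReal -
            (∫ t, Complex.exp (Complex.I * w * Real.log t) ∂(μ j)).re) atTop
            (𝓝 (m - (∫ t, Complex.exp (Complex.I * w * Real.log t) ∂ν).re)) :=
          hmass.sub h1
        have heq : ∀ j, ((μ j) Set.univ).toReal -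
            (∫ t, Complex.exp (Complex.I * w * Real.log t) ∂(μ j)).re =
            ((μ j) Set.univ).toReal - ∫ t, Real.cos (w * Real.log t) ∂(μ j) := by
          intro j; haveI := hμf j; rw [ch_re]
        simp only [heq] at h2
        rw [ch_re ν] at h2
        exact h2
    have hev : ∀ᶠ j in atTop,
        (∫ w in Set.Ioo 0 u,
          (((μ j) Set.univ).toReal - ∫ t, Real.cos (w * Real.log t) ∂(μ j))) ≤ ε / 2 * u := by
      apply hconv.eventually (eventually_le_nhds ?_)
      calc ∫ w in Set.Ioo 0 u, Fν w ≤ ε / 4 * u := hνle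
      _ < ε / 2 * u := by nlinarith
    filter_upwards [hev] with j hj
    haveI := hμf j
    have hkey := key (μ j) hu
    have : u / 2 * (((μ j) {t : ℝ | 2 / u ≤ |Real.log t|}).toReal) ≤ ε / 2 * u :=
      le_trans hkey hj
    nlinarith [ENNReal.toReal_nonneg (a := (μ j) {t : ℝ | 2 / u ≤ |Real.log t|})]


lemma cmInt {T : ℝ} [hT : Fact (0 < T)] (Q : C(AddCircle T, ℂ)) (κ : Measure ℝ)
    [IsFiniteMeasure κ] : Integrable (fun t => Q ((Real.log t : ℝ) : AddCircle T)) κ := by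
  apply integrable_of_bound ?_ ‖Q‖ (fun t => Q.norm_coe_le_norm _)
  exact (((map_continuous Q).comp (AddCircle.continuous_mk' T)).measurable.comp
    Real.measurable_log).aestronglyMeasurable

set_option maxHeartbeats 1000000 in
lemma main (μ : ℕ → Measure ℝ) (ν : Measure ℝ)
    (hμ0 : ∀ j, (μ j) (Set.Ioi (0:ℝ))ᶜ = 0) (hμf : ∀ j, IsFiniteMeasure (μ j))
    (hν0 : ν (Set.Ioi (0:ℝ))ᶜ = 0) [IsFiniteMeasure ν]
    (hch : ∀ w : ℝ, Tendsto (fun j => ∫ t, Complex.exp (Complex.I * w * Real.log t) ∂(μ j)) atTop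
      (𝓝 (∫ t, Complex.exp (Complex.I * w * Real.log t) ∂ν)))
    (f : ℝ → ℝ) (hfm : Measurable f) (hfc : ContinuousOn f (Set.Ioi 0))
    (C : ℝ) (hfb : ∀ t, |f t| ≤ C) :
    Tendsto (fun j => ∫ t, f t ∂(μ j)) atTop (𝓝 (∫ t, f t ∂ν)) := by
  have hC0 : 0 ≤ C := (abs_nonneg (f 0)).trans (hfb 0)
  set m : ℝ := (ν Set.univ).toReal with hm
  have hm0 : 0 ≤ m := ENNReal.toReal_nonneg
  rw [Metric.tendsto_nhds]
  intro ε hε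
  set D : ℝ := 2 * m + 4 * C + 8 with hD
  have hD0 : 0 < D := by positivity
  set ε' : ℝ := min 1 (ε / (2 * D)) with hε'
  have hε'0 : 0 < ε' := lt_min one_pos (by positivity)
  have hε'1 : ε' ≤ 1 := min_le_left _ _
  have hε'2 : ε' * D ≤ ε / 2 := by
    calc ε' * D ≤ (ε / (2 * D)) * D := by
          apply mul_le_mul_of_nonneg_right (min_le_right _ _) hD0.le
    _ = ε / 2 := by field_simp
  obtain ⟨u, hu, hνS, hμS⟩ := tight μ ν hμf hch hε'0
  set R : ℝ := 2 / u with hR'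
  have hR : 0 < R := by positivity
  set S : Set ℝ := {t : ℝ | 2 / u ≤ |Real.log t|} with hS
  have hSm : MeasurableSet S := measurableSet_le measurable_const Real.measurable_log.abs
  set T : ℝ := 2 * (R + 1) with hT'
  haveI hTfact : Fact (0 < T) := ⟨by positivity⟩
  set a : ℝ := -(R + 1) with ha'
  have haT : a + T = R + 1 := by rw [ha', hT']; ring
  -- the cutoff function
  set g : ℝ → ℝ := fun s => f (Real.exp s) * max 0 (min 1 (R + 1 - |s|)) with hg
  have hgc : Continuous g := by
    apply Continuous.mul
    · rw [← continuousOn_univ]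
      exact hfc.comp Real.continuous_exp.continuousOn (fun s _ => Real.exp_pos s)
    · exact continuous_const.max (continuous_const.min (continuous_const.sub continuous_abs))
  have htent01 : ∀ s : ℝ, max 0 (min 1 (R + 1 - |s|)) ∈ Set.Icc (0:ℝ) 1 := by
    intro s
    constructor
    · exact le_max_left _ _
    · apply max_le zero_le_one (min_le_left _ _)
  have hgb : ∀ s, |g s| ≤ C := by
    intro s
    rw [hg, abs_mul, abs_of_nonneg (htent01 s).1]
    calc |f (Real.exp s)| * max 0 (min 1 (R + 1 - |s|)) ≤ C * 1 :=
      mul_le_mul (hfb _) (htent01 s).2 (htent01 s).1 hC0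
    _ = C := mul_one C
  have htent_zero : ∀ s : ℝ, R + 1 ≤ |s| → g s = 0 := by
    intro s hs
    rw [hg]
    have : min 1 (R + 1 - |s|) ≤ 0 := le_trans (min_le_right _ _) (by linarith)
    simp only []
    rw [max_eq_left this, mul_zero]
  have htent_one : ∀ s : ℝ, |s| ≤ R → g s = f (Real.exp s) := by
    intro s hs
    rw [hg]
    simp only []
    rw [min_eq_left (by linarith), max_eq_right zero_le_one, mul_one]
  -- lift to the circle
  have hgaT : ((g a : ℝ) : ℂ) = ((g (a + T) : ℝ) : ℂ) := by
    rw [htent_zero a (by rw [ha', abs_neg, abs_of_pos (by positivity)]),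
      htent_zero (a + T) (by rw [haT, abs_of_pos (by positivity)])]
  set Gfun : AddCircle T → ℂ := AddCircle.liftIco T a (fun s => ((g s : ℝ) : ℂ)) with hGfun
  have hGc : Continuous Gfun :=
    AddCircle.liftIco_continuous hgaT (by fun_prop : Continuous fun s : ℝ => ((g s : ℝ) : ℂ)).continuousOn
  set G : C(AddCircle T, ℂ) := ⟨Gfun, hGc⟩ with hG
  have hGval : ∀ s ∈ Set.Ico a (a + T), G ((s : ℝ) : AddCircle T) = ((g s : ℝ) : ℂ) :=
    fun s hs => by
      show Gfun _ = _
      exact AddCircle.liftIco_coe_apply hs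
  have hGb : ∀ x, ‖G x‖ ≤ C := by
    intro x
    have hx : G x = ((g ((AddCircle.equivIco T a x : ℝ)) : ℝ) : ℂ) := rfl
    rw [hx, Complex.norm_real, Real.norm_eq_abs]
    exact hgb _
  -- trig polynomial approximation
  have hGmem : G ∈ closure ((Submodule.span ℂ (Set.range (@fourier T))) : Set C(AddCircle T, ℂ)) := by
    rw [← Submodule.topologicalClosure_coe, span_fourier_closure_eq_top]
    trivial
  rw [Metric.mem_closure_iff] at hGmem
  obtain ⟨P, hPmem, hPd⟩ := hGmem ε' hε'0
  have hGP : ∀ x, ‖G x - P x‖ ≤ ε' := by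
    intro x
    calc ‖G x - P x‖ = dist (G x) (P x) := (dist_eq_norm _ _).symm
    _ ≤ dist G P := ContinuousMap.dist_apply_le_dist x
    _ ≤ ε' := hPd.le
  have hPb : ∀ x, ‖P x‖ ≤ C + ε' := by
    intro x
    calc ‖P x‖ = ‖G x - (G x - P x)‖ := by ring_nf
    _ ≤ ‖G x‖ + ‖G x - P x‖ := norm_sub_le _ _
    _ ≤ C + ε' := add_le_add (hGb x) (hGP x)
  -- convergence for trig polynomials
  have hind : ∀ Q ∈ Submodule.span ℂ (Set.range (@fourier T)),
      Tendsto (fun j => ∫ t, Q ((Real.log t : ℝ) : AddCircle T) ∂(μ j)) atTop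
        (𝓝 (∫ t, Q ((Real.log t : ℝ) : AddCircle T) ∂ν)) := by
    intro Q hQ
    induction hQ using Submodule.span_induction with
    | mem x hx =>
        obtain ⟨n, rfl⟩ := hx
        have heq : ∀ s : ℝ, (fourier n) ((s : ℝ) : AddCircle T) =
            Complex.exp (Complex.I * ((2 * Real.pi * n / T : ℝ) : ℂ) * (s : ℂ)) := by
          intro s
          rw [fourier_coe_apply]
          congr 1
          push_cast
          ring
        simp only [heq]
        exact hch (2 * Real.pi * n / T)
    | zero => simp only [ContinuousMap.zero_apply, integral_zero]; exact tendsto_const_nhds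
    | add x y hx hy ihx ihy =>
        simp only [ContinuousMap.add_apply]
        have h1 : ∀ (κ : Measure ℝ) [IsFiniteMeasure κ],
            ∫ t, (x ((Real.log t : ℝ) : AddCircle T) + y ((Real.log t : ℝ) : AddCircle T)) ∂κ =
            (∫ t, x ((Real.log t : ℝ) : AddCircle T) ∂κ) +
              ∫ t, y ((Real.log t : ℝ) : AddCircle T) ∂κ := by
          intro κ _
          exact integral_add (cmInt x κ) (cmInt y κ)
        have := ihx.add ihy
        apply Tendsto.congr ?_ (by rw [← h1 ν] at this; exact this)
        intro j
        haveI := hμf j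
        exact (h1 (μ j)).symm
    | smul c x hx ihx =>
        simp only [ContinuousMap.smul_apply]
        have h1 : ∀ (κ : Measure ℝ),
            ∫ t, (c • x ((Real.log t : ℝ) : AddCircle T)) ∂κ =
            c • ∫ t, x ((Real.log t : ℝ) : AddCircle T) ∂κ := fun κ => integral_smul c _
        have := ihx.const_smul c
        apply Tendsto.congr ?_ (by rw [← h1 ν] at this; exact this)
        intro j
        exact (h1 (μ j)).symm
  have hconvP := hind P hPmem
  -- pass to real parts
  set p : ℝ → ℝ := fun t => (P ((Real.log t : ℝ) : AddCircle T)).re with hp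
  have hpm : Measurable p :=
    Complex.measurable_re.comp (((map_continuous P).comp
      (AddCircle.continuous_mk' T)).measurable.comp Real.measurable_log)
  have hpb : ∀ t, |p t| ≤ C + ε' := by
    intro t
    calc |p t| ≤ ‖P ((Real.log t : ℝ) : AddCircle T)‖ := Complex.abs_re_le_norm _
    _ = ‖P ((Real.log t : ℝ) : AddCircle T)‖ := rfl
    _ ≤ C + ε' := hPb _
  have hre : ∀ (κ : Measure ℝ) [IsFiniteMeasure κ],
      ∫ t, p t ∂κ = (∫ t, P ((Real.log t : ℝ) : AddCircle T) ∂κ).re := by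
    intro κ _
    have h := integral_re (𝕜 := ℂ) (cmInt P κ)
    simp only [RCLike.re_eq_complex_re] at h
    simp only [hp]
    rw [← h]
  have hconvp : Tendsto (fun j => ∫ t, p t ∂(μ j)) atTop (𝓝 (∫ t, p t ∂ν)) := by
    have h1 := (Complex.continuous_re.tendsto _).comp hconvP
    simp only [Function.comp_def] at h1
    rw [hre ν]
    apply Tendsto.congr ?_ h1
    intro j
    haveI := hμf j
    exact (hre (μ j)).symm
  -- pointwise estimate on (0, ∞)
  have hptw : ∀ t ∈ Set.Ioi (0:ℝ),
      |f t - p t| ≤ ε' + S.indicator (fun _ => 2 * C + ε') t := by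
    intro t ht
    by_cases hts : t ∈ S
    · rw [Set.indicator_of_mem hts]
      have h1 := hfb t
      have h2 := hpb t
      have := abs_sub (f t) (p t)
      linarith
    · rw [Set.indicator_of_notMem hts, add_zero]
      have hlt : |Real.log t| < R := by
        rw [hR']; exact not_le.1 hts
      have hmem : Real.log t ∈ Set.Ico a (a + T) := by
        rw [haT]
        have := abs_lt.1 hlt
        constructor
        · rw [ha']; linarith [this.1]
        · linarith [this.2]
      have h1 : G ((Real.log t : ℝ) : AddCircle T) = ((f t : ℝ) : ℂ) := by
        rw [hGval _ hmem, htent_one _ hlt.le, Real.exp_log ht]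
      set x : AddCircle T := ((Real.log t : ℝ) : AddCircle T)
      calc |f t - p t| = |(G x - P x).re| := by
            rw [Complex.sub_re, h1, Complex.ofReal_re]
      _ ≤ ‖G x - P x‖ := Complex.abs_re_le_norm _
      _ = ‖G x - P x‖ := rfl
      _ ≤ ε' := hGP x
  -- integral estimate
  have hbound : ∀ (κ : Measure ℝ) [IsFiniteMeasure κ], κ (Set.Ioi (0:ℝ))ᶜ = 0 →
      |(∫ t, f t ∂κ) - ∫ t, p t ∂κ| ≤
        ε' * (κ Set.univ).toReal + (2 * C + ε') * (κ S).toReal := by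
    intro κ _ hκ0
    have hfint : Integrable f κ := integrable_of_bound hfm.aestronglyMeasurable C
      (fun t => by rw [Real.norm_eq_abs]; exact hfb t)
    have hpint : Integrable p κ := integrable_of_bound hpm.aestronglyMeasurable (C + ε')
      (fun t => by rw [Real.norm_eq_abs]; exact hpb t)
    rw [← integral_sub hfint hpint]
    have hae : ∀ᵐ t ∂κ, t ∈ Set.Ioi (0:ℝ) := by
      rw [ae_iff]
      simpa [Set.compl_def] using hκ0
    have h1 : |∫ t, (f t - p t) ∂κ| ≤ ∫ t, |f t - p t| ∂κ := by
      simpa [Real.norm_eq_abs] using norm_integral_le_integral_norm (μ := κ) (fun t => f t - p t)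
    have h2 : ∫ t, |f t - p t| ∂κ ≤
        ∫ t, (ε' + S.indicator (fun _ => 2 * C + ε') t) ∂κ := by
      apply integral_mono_ae (hfint.sub hpint).abs
      · exact (integrable_const ε').add ((integrable_const _).indicator hSm)
      · filter_upwards [hae] with t ht
        exact hptw t ht
    have h3 : ∫ t, (ε' + S.indicator (fun _ => 2 * C + ε') t) ∂κ =
        ε' * (κ Set.univ).toReal + (2 * C + ε') * (κ S).toReal := by
      rw [integral_add (integrable_const ε') ((integrable_const _).indicator hSm),
        integral_const, integral_indicator_const _ hSm, smul_eq_mul, smul_eq_mul]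
      simp only [Measure.real]
      ring
    linarith
  -- mass bound
  have hmass := mass_tendsto μ ν hμf (hch 0)
  have hmb : ∀ᶠ j in atTop, ((μ j) Set.univ).toReal ≤ m + 1 :=
    hmass.eventually (eventually_le_nhds (by linarith))
  -- conclude
  filter_upwards [hμS, hmb, (Metric.tendsto_nhds.1 hconvp) ε' hε'0] with j h1 h2 h3
  haveI := hμf j
  rw [Real.dist_eq] at h3 ⊢
  have b1 := hbound (μ j) (hμ0 j)
  have b2 := hbound ν hν0
  have hSν : (ν S).toReal ≤ ε' := hνS
  have hSj : ((μ j) S).toReal ≤ ε' := h1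
  have e1 : |(∫ t, f t ∂(μ j)) - ∫ t, f t ∂ν| ≤
      |(∫ t, f t ∂(μ j)) - ∫ t, p t ∂(μ j)| + |(∫ t, p t ∂(μ j)) - ∫ t, p t ∂ν| +
        |(∫ t, p t ∂ν) - ∫ t, f t ∂ν| := by
    have := abs_sub_le ((∫ t, f t ∂(μ j))) (∫ t, p t ∂(μ j)) (∫ t, f t ∂ν)
    have := abs_sub_le ((∫ t, p t ∂(μ j))) (∫ t, p t ∂ν) (∫ t, f t ∂ν)
    linarith
  have hb1 : |(∫ t, f t ∂(μ j)) - ∫ t, p t ∂(μ j)| ≤ ε' * (m + 1) + (2 * C + 1) * ε' := by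
    have hnn : (0:ℝ) ≤ ((μ j) S).toReal := ENNReal.toReal_nonneg
    nlinarith [ENNReal.toReal_nonneg (a := (μ j) Set.univ)]
  have hb2 : |(∫ t, p t ∂ν) - ∫ t, f t ∂ν| ≤ ε' * m + (2 * C + 1) * ε' := by
    rw [abs_sub_comm]
    nlinarith [ENNReal.toReal_nonneg (a := ν S)]
  calc |(∫ t, f t ∂(μ j)) - ∫ t, f t ∂ν| ≤
      (ε' * (m + 1) + (2 * C + 1) * ε') + ε' + (ε' * m + (2 * C + 1) * ε') := by
        linarith [h3]
  _ ≤ ε' * D := by rw [hD]; nlinarith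
  _ ≤ ε / 2 := hε'2
  _ < ε := by linarith


lemma ae_pos {κ : Measure ℝ} (hκ0 : κ (Set.Ioi (0:ℝ))ᶜ = 0) : ∀ᵐ t ∂κ, t ∈ Set.Ioi (0:ℝ) := by
  rw [ae_iff]
  simpa [Set.compl_def] using hκ0

lemma mellin_line0 (κ : Measure ℝ) (hκ0 : κ (Set.Ioi (0:ℝ))ᶜ = 0) (w : ℝ) :
    mellinT κ (Complex.I * w) = ∫ t, Complex.exp (Complex.I * w * Real.log t) ∂κ := by
  apply integral_congr_ae
  filter_upwards [ae_pos hκ0] with t ht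
  rw [Complex.cpow_def_of_ne_zero (Complex.ofReal_ne_zero.2 (ne_of_gt ht)),
    ← Complex.ofReal_log (le_of_lt ht)]
  congr 1
  ring

lemma mellin_line1 (κ : Measure ℝ) (hκ0 : κ (Set.Ioi (0:ℝ))ᶜ = 0) (w : ℝ) :
    mellinT κ (1 + Complex.I * w) =
      ∫ t, ((t : ℂ) * Complex.exp (Complex.I * w * Real.log t)) ∂κ := by
  apply integral_congr_ae
  filter_upwards [ae_pos hκ0] with t ht
  rw [Complex.cpow_def_of_ne_zero (Complex.ofReal_ne_zero.2 (ne_of_gt ht)),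
    ← Complex.ofReal_log (le_of_lt ht)]
  have he : ((Real.log t : ℝ) : ℂ) * (1 + Complex.I * w) =
      ((Real.log t : ℝ) : ℂ) + Complex.I * w * ((Real.log t : ℝ) : ℂ) := by ring
  rw [he, Complex.exp_add, ← Complex.ofReal_exp, Real.exp_log ht]

section WD

variable (κ : Measure ℝ)

def wd : Measure ℝ := κ.withDensity (fun t => ((Real.toNNReal t : ℝ≥0) : ℝ≥0∞))

lemma wd_def : wd κ = κ.withDensity (fun t => ((Real.toNNReal t : ℝ≥0) : ℝ≥0∞)) := rfl

lemma wd_fin (hκ : MemMtri κ) : IsFiniteMeasure (wd κ) := by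
  constructor
  rw [wd_def, withDensity_apply _ MeasurableSet.univ, setLIntegral_univ]
  exact hκ.2.2

lemma wd_conc (hκ0 : κ (Set.Ioi (0:ℝ))ᶜ = 0) : (wd κ) (Set.Ioi (0:ℝ))ᶜ = 0 := by
  rw [wd_def, withDensity_apply _ measurableSet_Ioi.compl]
  exact setLIntegral_measure_zero _ _ hκ0

lemma wd_integral {E : Type} [NormedAddCommGroup E] [NormedSpace ℝ E] (g : ℝ → E) :
    ∫ t, g t ∂(wd κ) = ∫ t, (Real.toNNReal t) • g t ∂κ := by
  rw [wd_def]
  exact integral_withDensity_eq_integral_smul measurable_real_toNNReal g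

lemma wd_exp (hκ0 : κ (Set.Ioi (0:ℝ))ᶜ = 0) (w : ℝ) :
    ∫ t, Complex.exp (Complex.I * w * Real.log t) ∂(wd κ) =
      ∫ t, ((t : ℂ) * Complex.exp (Complex.I * w * Real.log t)) ∂κ := by
  rw [wd_integral]
  apply integral_congr_ae
  filter_upwards [ae_pos hκ0] with t ht
  rw [NNReal.smul_def, Real.coe_toNNReal t (le_of_lt ht), Complex.real_smul]

lemma wd_mul (hκ0 : κ (Set.Ioi (0:ℝ))ᶜ = 0) (f : ℝ → ℝ) :
    ∫ t, f t ∂(wd κ) = ∫ t, t * f t ∂κ := by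
  rw [wd_integral]
  apply integral_congr_ae
  filter_upwards [ae_pos hκ0] with t ht
  rw [NNReal.smul_def, Real.coe_toNNReal t (le_of_lt ht), smul_eq_mul]

end WD


end MellinLevyAux

open MellinLevyAux

/-- Lévy-type continuity: if the Mellin transforms of `μ_j ∈ M^▽` converge pointwise
to that of `μ ∈ M^▽` on both boundary lines `Re u = 0` and `Re u = 1`, then `μ_j → μ`
in `M^▽`: both `μ_j → μ` and `t·μ_j → t·μ` weakly, i.e. tested against every bounded
continuous function on `ℝ₊ˣ`. -/
theorem mellinT_levy_continuity (μ : ℕ → Measure ℝ) (ν : Measure ℝ)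
    (hμ : ∀ j, MemMtri (μ j)) (hν : MemMtri ν)
    (h0 : ∀ w : ℝ, Tendsto (fun j => mellinT (μ j) (Complex.I * w)) atTop
      (𝓝 (mellinT ν (Complex.I * w))))
    (h1 : ∀ w : ℝ, Tendsto (fun j => mellinT (μ j) (1 + Complex.I * w)) atTop
      (𝓝 (mellinT ν (1 + Complex.I * w)))) :
    ∀ f : ℝ → ℝ, Measurable f → ContinuousOn f (Set.Ioi 0) → (∃ C, ∀ t, |f t| ≤ C) →
      Tendsto (fun j => ∫ t, f t ∂(μ j)) atTop (𝓝 (∫ t, f t ∂ν)) ∧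
      Tendsto (fun j => ∫ t, t * f t ∂(μ j)) atTop (𝓝 (∫ t, t * f t ∂ν)) := by
  intro f hfm hfc hfB
  obtain ⟨C, hfb⟩ := hfB
  haveI hνf : IsFiniteMeasure ν := ⟨hν.2.1⟩
  have hμf : ∀ j, IsFiniteMeasure (μ j) := fun j => ⟨(hμ j).2.1⟩
  constructor
  · -- first part
    apply main μ ν (fun j => (hμ j).1) hμf hν.1 ?_ f hfm hfc C hfb
    intro w
    have h := h0 w
    rw [mellin_line0 ν hν.1 w] at h
    apply Tendsto.congr ?_ h
    intro j
    exact mellin_line0 (μ j) (hμ j).1 w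
  · -- second part, using withDensity measures
    haveI : IsFiniteMeasure (wd ν) := wd_fin ν hν
    have hwdf : ∀ j, IsFiniteMeasure (wd (μ j)) := fun j => wd_fin (μ j) (hμ j)
    have hconc : ∀ j, (wd (μ j)) (Set.Ioi (0:ℝ))ᶜ = 0 := fun j => wd_conc (μ j) (hμ j).1
    have hch : ∀ w : ℝ,
        Tendsto (fun j => ∫ t, Complex.exp (Complex.I * w * Real.log t) ∂(wd (μ j)))
          atTop (𝓝 (∫ t, Complex.exp (Complex.I * w * Real.log t) ∂(wd ν))) := by
      intro w
      have h := h1 w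
      rw [mellin_line1 ν hν.1 w, ← wd_exp ν hν.1 w] at h
      apply Tendsto.congr ?_ h
      intro j
      rw [mellin_line1 (μ j) (hμ j).1 w, ← wd_exp (μ j) (hμ j).1 w]
    have h := main (fun j => wd (μ j)) (wd ν) hconc hwdf (wd_conc ν hν.1) hch f hfm hfc C hfb
    rw [wd_mul ν hν.1 f] at h
    apply Tendsto.congr ?_ h
    intro j
    exact wd_mul (μ j) (hμ j).1 f
end
end
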